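/- Let k ≥ 2 and let n ≥ 2 be the largest natural number such that k ≥ n(n-1)/2 + 1. Then for every surjective colouring Δ : ℕ^(2) ↠ [k], the set F_Δ has size at least n. Equivalently, ψ(k) ≥ n. -/

import Mathlib

/-- The colour of the unordered edge `{x, y}` (only values on distinct pairs matter). -/
def edgeCol (Δ : ℕ → ℕ → ℕ) (x y : ℕ) : ℕ := Δ (min x y) (max x y)

/-- `colourSet Δ X` is the set of colours attained by `Δ` on edges with both endpoints in `X`. -/
def colourSet (Δ : ℕ → ℕ → ℕ) (X : Set ℕ) : Set ℕ :=
  {c | ∃ x ∈ X, ∃ y ∈ X, x ≠ y ∧ edgeCol Δ x y = c}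

/-- `Δ` is a surjective colouring `ℕ^(2) ↠ [k]` of the edges of the complete
graph on `ℕ` with colour set `[k] = {1, …, k}`. -/
def IsColouring (Δ : ℕ → ℕ → ℕ) (k : ℕ) : Prop :=
  (∀ x y : ℕ, x ≠ y → edgeCol Δ x y ∈ Finset.Icc 1 k) ∧
  (∀ c ∈ Finset.Icc 1 k, ∃ x y : ℕ, x ≠ y ∧ edgeCol Δ x y = c)

/-- `F_Δ`: the set of `m ∈ [k]` for which some infinite `X ⊆ ℕ` is exactly `m`-coloured. -/
def FSet (Δ : ℕ → ℕ → ℕ) (k : ℕ) : Set ℕ :=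
  {m | m ∈ Finset.Icc 1 k ∧ ∃ X : Set ℕ, X.Infinite ∧ (colourSet Δ X).ncard = m}

/-- `ψ k`: the minimum of `|F_Δ|` over all surjective colourings `Δ : ℕ^(2) ↠ [k]`. -/
noncomputable def psi (k : ℕ) : ℕ :=
  sInf {m | ∃ Δ : ℕ → ℕ → ℕ, IsColouring Δ k ∧ (FSet Δ k).ncard = m}

lemma edgeCol_comm (Δ : ℕ → ℕ → ℕ) (x y : ℕ) : edgeCol Δ x y = edgeCol Δ y x := by
  unfold edgeCol; rw [min_comm, max_comm]

/-- Pigeonhole: an infinite set mapped into `Icc 1 k` has an infinite fibre. -/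
lemma pigeon (k : ℕ) (A : Set ℕ) (hA : A.Infinite) (F : ℕ → ℕ)
    (hF : ∀ a ∈ A, F a ∈ Finset.Icc 1 k) :
    ∃ c ∈ Finset.Icc 1 k, {a ∈ A | F a = c}.Infinite := by
  by_contra h
  push_neg at h
  have hfin : (⋃ c ∈ (Finset.Icc 1 k : Finset ℕ), {a ∈ A | F a = c}).Finite := by
    apply Set.Finite.biUnion (Finset.finite_toSet _)
    intro c hc
    have := h c (by exact_mod_cast hc)
    exact this
  apply hA
  apply hfin.subset
  intro a ha
  simp only [Set.mem_iUnion]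
  exact ⟨F a, by simpa using hF a ha, ha, rfl⟩

/-- From an infinite set, extract an infinite subset above `j` on which all
edges from `j` get a single colour. -/
lemma exists_step (Δ : ℕ → ℕ → ℕ) (k : ℕ)
    (hcol : ∀ x y : ℕ, x ≠ y → edgeCol Δ x y ∈ Finset.Icc 1 k)
    (j : ℕ) (A : Set ℕ) :
    ∃ (B : Set ℕ) (c : ℕ), A.Infinite →
      (B ⊆ A ∧ B.Infinite ∧ c ∈ Finset.Icc 1 k ∧ ∀ a ∈ B, j < a ∧ edgeCol Δ j a = c) := by
  by_cases hA : A.Infinite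
  · have h1 : (A \ Set.Iic j).Infinite := hA.diff (Set.finite_Iic j)
    obtain ⟨c, hc, hinf⟩ := pigeon k (A \ Set.Iic j) h1 (edgeCol Δ j) (by
      intro a ha
      exact hcol j a (by simp only [Set.mem_diff, Set.mem_Iic] at ha; omega))
    refine ⟨{a ∈ A \ Set.Iic j | edgeCol Δ j a = c}, c, fun _ => ⟨?_, hinf, hc, ?_⟩⟩
    · intro a ha; exact ha.1.1
    · intro a ha
      refine ⟨?_, ha.2⟩
      have := ha.1.2; simp only [Set.mem_Iic] at this; omega
  · exact ⟨A, 0, fun h => absurd h hA⟩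

/-- Infinite Ramsey theorem for pairs, colours in `Icc 1 k`. -/
lemma infinite_ramsey (Δ : ℕ → ℕ → ℕ) (k : ℕ)
    (hcol : ∀ x y : ℕ, x ≠ y → edgeCol Δ x y ∈ Finset.Icc 1 k) :
    ∃ (M : Set ℕ) (c : ℕ), M.Infinite ∧ c ∈ Finset.Icc 1 k ∧
      ∀ x ∈ M, ∀ y ∈ M, x ≠ y → edgeCol Δ x y = c := by
  classical
  -- state: (x, c, A)
  let step : ℕ × ℕ × Set ℕ → ℕ × ℕ × Set ℕ := fun p =>
    let x' : ℕ := if h : p.2.2.Infinite then h.nonempty.choose else 0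
    let B := (exists_step Δ k hcol x' p.2.2).choose
    let c' := (exists_step Δ k hcol x' p.2.2).choose_spec.choose
    (x', c', B \ {x'})
  let seq : ℕ → ℕ × ℕ × Set ℕ := fun n => Nat.rec (step (0, 0, Set.univ)) (fun _ p => step p) n
  have hstep : ∀ p : ℕ × ℕ × Set ℕ, p.2.2.Infinite →
      (step p).2.2.Infinite ∧ (step p).1 ∈ p.2.2 ∧ (step p).2.2 ⊆ p.2.2 ∧
      (step p).2.1 ∈ Finset.Icc 1 k ∧
      (∀ a ∈ (step p).2.2, a ≠ (step p).1 ∧ edgeCol Δ (step p).1 a = (step p).2.1) := by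
    intro p hp
    have hx' : (if h : p.2.2.Infinite then h.nonempty.choose else 0) ∈ p.2.2 := by
      rw [dif_pos hp]; exact hp.nonempty.choose_spec
    set x' := if h : p.2.2.Infinite then h.nonempty.choose else 0 with hx'def
    obtain ⟨hB1, hB2, hc, hB3⟩ :=
      (exists_step Δ k hcol x' p.2.2).choose_spec.choose_spec hp
    set B := (exists_step Δ k hcol x' p.2.2).choose
    refine ⟨hB2.diff (Set.finite_singleton _), hx', ?_, hc, ?_⟩
    · intro a ha; exact hB1 ha.1
    · intro a ha
      refine ⟨by simpa using ha.2, (hB3 a ha.1).2⟩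
  have hseqinf : ∀ n, (seq n).2.2.Infinite := by
    intro n; induction n with
    | zero => exact (hstep _ Set.infinite_univ).1
    | succ n ih => exact (hstep _ ih).1
  -- properties across steps
  have hseq : ∀ n, (seq (n+1)).1 ∈ (seq n).2.2 ∧ (seq (n+1)).2.2 ⊆ (seq n).2.2 ∧
      (seq (n+1)).2.1 ∈ Finset.Icc 1 k ∧
      (∀ a ∈ (seq (n+1)).2.2, a ≠ (seq (n+1)).1 ∧ edgeCol Δ (seq (n+1)).1 a = (seq (n+1)).2.1) := by
    intro n
    obtain ⟨_, h2, h3, h4, h5⟩ := hstep (seq n) (hseqinf n)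
    exact ⟨h2, h3, h4, h5⟩
  set xs : ℕ → ℕ := fun n => (seq (n+1)).1 with hxs
  set cs : ℕ → ℕ := fun n => (seq (n+1)).2.1 with hcs
  have hmono : ∀ i j, i ≤ j → (seq j).2.2 ⊆ (seq i).2.2 := by
    intro i j hij
    induction j with
    | zero => have : i = 0 := by omega
              subst this; exact subset_rfl
    | succ j ih =>
      rcases Nat.eq_or_lt_of_le hij with h | h
      · subst h; exact subset_rfl
      · exact subset_trans (hseq j).2.1 (ih (by omega))
  have hxmem : ∀ i j, i < j → xs j ∈ (seq (i+1)).2.2 := by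
    intro i j hij
    exact hmono (i+1) j (by omega) (hseq j).1
  have hedge : ∀ i j, i < j → xs i ≠ xs j ∧ edgeCol Δ (xs i) (xs j) = cs i := by
    intro i j hij
    have := ((hseq i).2.2.2 (xs j) (hxmem i j hij))
    exact ⟨fun h => this.1 h.symm, this.2⟩
  -- pigeonhole on cs
  obtain ⟨c, hc, hI⟩ := pigeon k Set.univ Set.infinite_univ cs (fun a _ => (hseq a).2.2.1)
  refine ⟨xs '' {a | cs a = c}, c, ?_, hc, ?_⟩
  · apply Set.Infinite.image ?_ (by simpa using hI)
    intro a ha b hb hab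
    by_contra hne
    rcases Nat.lt_trichotomy a b with h | h | h
    · exact (hedge a b h).1 hab
    · exact hne h
    · exact (hedge b a h).1 hab.symm
  · rintro x ⟨a, ha, rfl⟩ y ⟨b, hb, rfl⟩ hxy
    rcases Nat.lt_or_ge a b with h | h
    · rw [(hedge a b h).2]; exact ha
    · rcases Nat.eq_or_lt_of_le h with h' | h'
      · subst h'; exact absurd rfl hxy
      · rw [edgeCol_comm, (hedge b a h').2]; exact hb


section Tails

variable (Δ : ℕ → ℕ → ℕ) (k : ℕ)
  (hcol : ∀ x y : ℕ, x ≠ y → edgeCol Δ x y ∈ Finset.Icc 1 k) (M : Set ℕ)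

/-- Nested tails: `AA (j+1)` is an infinite subset of `AA j` above `j`,
joined monochromatically to `j`. -/
noncomputable def AA : ℕ → Set ℕ
  | 0 => M
  | j+1 => (exists_step Δ k hcol j (AA j)).choose

/-- The colour of edges from `j` to `AA (j+1)`. -/
noncomputable def cvf (j : ℕ) : ℕ :=
  (exists_step Δ k hcol j (AA Δ k hcol M j)).choose_spec.choose

variable (hM : M.Infinite)
include hM

lemma AA_inf : ∀ j, (AA Δ k hcol M j).Infinite := by
  intro j
  induction j with
  | zero => exact hM
  | succ j ih =>
    exact ((exists_step Δ k hcol j (AA Δ k hcol M j)).choose_spec.choose_spec ih).2.1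

lemma AA_succ (j : ℕ) :
    AA Δ k hcol M (j+1) ⊆ AA Δ k hcol M j ∧ cvf Δ k hcol M j ∈ Finset.Icc 1 k ∧
    ∀ a ∈ AA Δ k hcol M (j+1), j < a ∧ edgeCol Δ j a = cvf Δ k hcol M j := by
  obtain ⟨h1, _, h3, h4⟩ :=
    (exists_step Δ k hcol j (AA Δ k hcol M j)).choose_spec.choose_spec (AA_inf Δ k hcol M hM j)
  exact ⟨h1, h3, h4⟩

lemma AA_mono {i j : ℕ} (hij : i ≤ j) : AA Δ k hcol M j ⊆ AA Δ k hcol M i := by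
  induction j with
  | zero => have : i = 0 := by omega
            subst this; exact subset_rfl
  | succ j ih =>
    rcases Nat.eq_or_lt_of_le hij with h | h
    · subst h; exact subset_rfl
    · exact subset_trans (AA_succ Δ k hcol M hM j).1 (ih (by omega))

end Tails

section FS

variable (Δ : ℕ → ℕ → ℕ) (k : ℕ)
  (hcol : ∀ x y : ℕ, x ≠ y → edgeCol Δ x y ∈ Finset.Icc 1 k) (M : Set ℕ) (c0 : ℕ)

/-- Colour set of `S ∪ (tail)`, as a finite set. -/
noncomputable def fS (S : Finset ℕ) : Finset ℕ :=
  insert c0 (S.image (cvf Δ k hcol M) ∪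
    S.offDiag.image (fun p => edgeCol Δ p.1 p.2))

lemma fS_c0 (S : Finset ℕ) : c0 ∈ fS Δ k hcol M c0 S := Finset.mem_insert_self _ _

lemma fS_card0 : (fS Δ k hcol M c0 ∅).card = 1 := by
  simp [fS]

lemma fS_monotone {S T : Finset ℕ} (h : S ⊆ T) :
    fS Δ k hcol M c0 S ⊆ fS Δ k hcol M c0 T := by
  intro x hx
  rcases Finset.mem_insert.mp hx with rfl | hx
  · exact Finset.mem_insert_self _ _
  · apply Finset.mem_insert_of_mem
    rcases Finset.mem_union.mp hx with hx | hx
    · exact Finset.mem_union_left _ (Finset.image_subset_image h hx)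
    · apply Finset.mem_union_right
      apply Finset.image_subset_image _ hx
      exact Finset.offDiag_mono h

lemma fS_cv_mem {u : ℕ} {S : Finset ℕ} (h : u ∈ S) :
    cvf Δ k hcol M u ∈ fS Δ k hcol M c0 S :=
  Finset.mem_insert_of_mem (Finset.mem_union_left _ (Finset.mem_image_of_mem _ h))

lemma fS_edge_mem {u w : ℕ} {S : Finset ℕ} (hu : u ∈ S) (hw : w ∈ S) (huw : u ≠ w) :
    edgeCol Δ u w ∈ fS Δ k hcol M c0 S :=
  Finset.mem_insert_of_mem (Finset.mem_union_right _
    (Finset.mem_image.mpr ⟨(u, w), Finset.mem_offDiag.mpr ⟨hu, hw, huw⟩, rfl⟩))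

lemma fS_desc (S : Finset ℕ) (x : ℕ) (hx : x ∈ fS Δ k hcol M c0 S) :
    x = c0 ∨ (∃ u ∈ S, x = cvf Δ k hcol M u) ∨
      (∃ u ∈ S, ∃ w ∈ S, u ≠ w ∧ x = edgeCol Δ u w) := by
  rcases Finset.mem_insert.mp hx with rfl | hx
  · exact Or.inl rfl
  · rcases Finset.mem_union.mp hx with hx | hx
    · obtain ⟨u, hu, rfl⟩ := Finset.mem_image.mp hx
      exact Or.inr (Or.inl ⟨u, hu, rfl⟩)
    · obtain ⟨⟨u, w⟩, huw, rfl⟩ := Finset.mem_image.mp hx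
      obtain ⟨hu, hw, hne⟩ := Finset.mem_offDiag.mp huw
      exact Or.inr (Or.inr ⟨u, hu, w, hw, hne, rfl⟩)

lemma fS_insert (u : ℕ) (S : Finset ℕ) :
    fS Δ k hcol M c0 (insert u S) ⊆
      fS Δ k hcol M c0 S ∪ insert (cvf Δ k hcol M u) (S.image (edgeCol Δ u)) := by
  intro x hx
  rcases fS_desc Δ k hcol M c0 _ x hx with h | ⟨w, hw, h⟩ | ⟨p, hp, q, hq, hpq, h⟩
  · rw [h]
    exact Finset.mem_union_left _ (fS_c0 Δ k hcol M c0 S)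
  · rw [h]
    by_cases hwu : w = u
    · rw [hwu]
      exact Finset.mem_union_right _ (Finset.mem_insert_self _ _)
    · exact Finset.mem_union_left _
        (fS_cv_mem Δ k hcol M c0 ((Finset.mem_insert.mp hw).resolve_left hwu))
  · rw [h]
    by_cases hpu : p = u
    · have hq' : q ∈ S := by
        rcases Finset.mem_insert.mp hq with h2 | h2
        · exact absurd (hpu.trans h2.symm) hpq
        · exact h2
      rw [hpu]
      exact Finset.mem_union_right _
        (Finset.mem_insert_of_mem (Finset.mem_image_of_mem _ hq'))
    · have hp' : p ∈ S := (Finset.mem_insert.mp hp).resolve_left hpu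
      by_cases hqu : q = u
      · rw [hqu, edgeCol_comm]
        exact Finset.mem_union_right _
          (Finset.mem_insert_of_mem (Finset.mem_image_of_mem _ hp'))
      · exact Finset.mem_union_left _
          (fS_edge_mem Δ k hcol M c0 hp' ((Finset.mem_insert.mp hq).resolve_left hqu) hpq)

variable (hM : M.Infinite)
  (hmono : ∀ x ∈ M, ∀ y ∈ M, x ≠ y → edgeCol Δ x y = c0)

include hM hmono in
lemma fS_spec (S : Finset ℕ) (N : ℕ) (hN : ∀ x ∈ S, x < N) :
    colourSet Δ (↑S ∪ AA Δ k hcol M N) = ↑(fS Δ k hcol M c0 S) := by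
  classical
  have hAAM : AA Δ k hcol M N ⊆ M := AA_mono Δ k hcol M hM (Nat.zero_le N)
  have hgt : ∀ a ∈ AA Δ k hcol M N, ∀ x ∈ S, x < a := by
    intro a ha x hx
    have h1 : AA Δ k hcol M N ⊆ AA Δ k hcol M (x+1) := AA_mono Δ k hcol M hM (hN x hx)
    exact ((AA_succ Δ k hcol M hM x).2.2 a (h1 ha)).1
  have hedgecv : ∀ x ∈ S, ∀ a ∈ AA Δ k hcol M N, edgeCol Δ x a = cvf Δ k hcol M x := by
    intro x hx a ha
    have h1 : AA Δ k hcol M N ⊆ AA Δ k hcol M (x+1) := AA_mono Δ k hcol M hM (hN x hx)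
    exact ((AA_succ Δ k hcol M hM x).2.2 a (h1 ha)).2
  ext c
  constructor
  · rintro ⟨x, hx, y, hy, hxy, rfl⟩
    apply Finset.mem_coe.mpr
    rcases Set.mem_union _ _ _ |>.mp hx with hx' | hx' <;>
      rcases Set.mem_union _ _ _ |>.mp hy with hy' | hy'
    · -- both in S
      apply Finset.mem_insert_of_mem
      apply Finset.mem_union_right
      exact Finset.mem_image.mpr
        ⟨(x, y), Finset.mem_offDiag.mpr ⟨Finset.mem_coe.mp hx', Finset.mem_coe.mp hy', hxy⟩, rfl⟩
    · -- x ∈ S, y ∈ AA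
      apply Finset.mem_insert_of_mem
      apply Finset.mem_union_left
      rw [hedgecv x (Finset.mem_coe.mp hx') y hy']
      exact Finset.mem_image_of_mem _ (Finset.mem_coe.mp hx')
    · -- x ∈ AA, y ∈ S
      apply Finset.mem_insert_of_mem
      apply Finset.mem_union_left
      rw [edgeCol_comm, hedgecv y (Finset.mem_coe.mp hy') x hx']
      exact Finset.mem_image_of_mem _ (Finset.mem_coe.mp hy')
    · -- both in AA
      rw [hmono x (hAAM hx') y (hAAM hy') hxy]
      exact Finset.mem_insert_self _ _
  · intro hc
    have hc' := Finset.mem_coe.mp hc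
    have hAinf := AA_inf Δ k hcol M hM N
    rcases Finset.mem_insert.mp hc' with rfl | hc2
    · obtain ⟨a, ha⟩ := hAinf.nonempty
      obtain ⟨b, hb⟩ := (hAinf.diff (Set.finite_singleton a)).nonempty
      have hab : a ≠ b := fun h => hb.2 (h ▸ rfl)
      exact ⟨a, Or.inr ha, b, Or.inr hb.1, hab,
        hmono a (hAAM ha) b (hAAM hb.1) hab⟩
    · rcases Finset.mem_union.mp hc2 with hc3 | hc3
      · obtain ⟨x, hx, rfl⟩ := Finset.mem_image.mp hc3
        obtain ⟨a, ha⟩ := hAinf.nonempty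
        refine ⟨x, Or.inl hx, a, Or.inr ha, ?_, hedgecv x hx a ha⟩
        have := hgt a ha x hx; omega
      · obtain ⟨⟨x, y⟩, hxy, rfl⟩ := Finset.mem_image.mp hc3
        obtain ⟨hx, hy, hne⟩ := Finset.mem_offDiag.mp hxy
        exact ⟨x, Or.inl hx, y, Or.inl hy, hne, rfl⟩

end FS


/-- Abstract gap lemma. `f S` is the colour set of `S ∪ (monochromatic tail)`,
`c0` the tail colour, `cvf u` the colour from `u` to the tail, `ec u w` edge colours. -/
lemma gap_abstract (k : ℕ) (c0 : ℕ) (cvf : ℕ → ℕ) (ec : ℕ → ℕ → ℕ)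
    (f : Finset ℕ → Finset ℕ) (G : Finset ℕ)
    (hmono : ∀ {S T : Finset ℕ}, S ⊆ T → f S ⊆ f T)
    (hins : ∀ u S, f (insert u S) ⊆ (f S ∪ insert (cvf u) (S.image (ec u))))
    (hecomm : ∀ u w, ec u w = ec w u)
    (hedge_mem : ∀ {u w : ℕ} {S}, u ∈ S → w ∈ S → u ≠ w → ec u w ∈ f S)
    (hcv_mem : ∀ {u : ℕ} {S}, u ∈ S → cvf u ∈ f S)
    (hdesc : ∀ S x, x ∈ f S → x = c0 ∨ (∃ u ∈ S, x = cvf u) ∨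
        (∃ u ∈ S, ∃ w ∈ S, u ≠ w ∧ x = ec u w))
    (hc0 : ∀ S, c0 ∈ f S)
    (hcard0 : (f ∅).card = 1)
    (hG : ∀ S, (f S).card ∈ G)
    (hIcc : ∀ S, f S ⊆ Finset.Icc 1 k)
    (hfull : ∃ S₀ : Finset ℕ, Finset.Icc 1 k ⊆ f S₀)
    (g : ℕ) (hSg : ∃ S, (f S).card = g) (hgk : g < k) :
    ∃ g' ∈ G, g < g' ∧ g' ≤ g + (G.filter (· ≤ g)).card := by
  classical
  set j := (G.filter (· ≤ g)).card with hjdef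
  obtain ⟨Sg, hSgcard⟩ := hSg
  have hg1 : 1 ≤ g := by
    rw [← hSgcard]
    exact Finset.card_pos.mpr ⟨c0, hc0 Sg⟩
  have h1G : (1 : ℕ) ∈ G := hcard0 ▸ hG ∅
  have hj1 : 1 ≤ j := by
    apply Finset.card_pos.mpr
    exact ⟨1, Finset.mem_filter.mpr ⟨h1G, hg1⟩⟩
  by_contra hcon
  push_neg at hcon
  have K : ∀ S : Finset ℕ, (f S).card ≤ g ∨ g + j < (f S).card := by
    intro S
    rcases le_or_gt (f S).card g with h | h
    · exact Or.inl h
    · exact Or.inr (hcon _ (hG S) h)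
  obtain ⟨S₀, hS₀⟩ := hfull
  set P := Sg ∪ S₀ with hPdef
  have hfP : f P = Finset.Icc 1 k :=
    Finset.Subset.antisymm (hIcc P) (hS₀.trans (hmono Finset.subset_union_right))
  have hfPcard : (f P).card = k := by rw [hfP, Nat.card_Icc]; omega
  -- maximal low subset of P
  set L := P.powerset.filter (fun T => (f T).card ≤ g) with hLdef
  have hLne : Sg ∈ L := Finset.mem_filter.mpr
    ⟨Finset.mem_powerset.mpr Finset.subset_union_left, le_of_eq hSgcard⟩
  obtain ⟨T', hT'L, hT'max⟩ := Finset.exists_max_image L Finset.card ⟨Sg, hLne⟩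
  have hT'P : T' ⊆ P := Finset.mem_powerset.mp (Finset.mem_filter.mp hT'L).1
  have hT'low : (f T').card ≤ g := (Finset.mem_filter.mp hT'L).2
  have hBump : ∀ w ∈ P, w ∉ T' → g < (f (insert w T')).card := by
    intro w hwP hwT'
    by_contra hle
    push_neg at hle
    have hmem : insert w T' ∈ L := Finset.mem_filter.mpr
      ⟨Finset.mem_powerset.mpr (Finset.insert_subset hwP hT'P), hle⟩
    have := hT'max _ hmem
    rw [Finset.card_insert_of_notMem hwT'] at this
    omega
  have hT'ne : T' ≠ P := by
    intro h
    rw [h, hfPcard] at hT'low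
    omega
  obtain ⟨v, hvP, hvT'⟩ := Finset.exists_of_ssubset (hT'P.ssubset_of_ne hT'ne)
  -- the main induction
  have key : ∀ N : ℕ, ∀ W : Finset ℕ, W ⊆ T' → (T' \ W).card = N →
      (f (insert v W)).card ≤ g →
      W.card + 1 ≤ (G.filter (fun m =>
        (f {v}).card ≤ m ∧ m ≤ (f (insert v W)).card)).card →
      False := by
    intro N
    induction N using Nat.strong_induction_on with
    | _ N IH =>
    intro W hWT' hWN hWlow hWinv
    have hvW : v ∉ W := fun h => hvT' (hWT' h)
    set Jfil := G.filter (fun m => (f {v}).card ≤ m ∧ m ≤ (f (insert v W)).card) with hJfil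
    have hJsub : Jfil ⊆ G.filter (· ≤ g) := by
      intro m hm
      rw [Finset.mem_filter] at hm ⊢
      exact ⟨hm.1, le_trans hm.2.2 hWlow⟩
    have hWj : W.card + 1 ≤ j := le_trans hWinv (Finset.card_le_card hJsub)
    by_cases hstuck : ∀ u ∈ T', u ∉ W → (f (insert u (insert v W))).card ≤ (f (insert v W)).card
    · -- stuck case
      have hstuckeq : ∀ u ∈ T', u ∉ W → f (insert u (insert v W)) = f (insert v W) := by
        intro u hu hnu
        exact (Finset.eq_of_subset_of_card_le (hmono (Finset.subset_insert u _))
          (hstuck u hu hnu)).symm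
      have hedgeVW : ∀ w ∈ T', ec v w ∈ f (insert v W) := by
        intro w hw
        have hwv : v ≠ w := fun h => hvT' (h ▸ hw)
        by_cases hwW : w ∈ W
        · exact hedge_mem (Finset.mem_insert_self _ _) (Finset.mem_insert_of_mem hwW) hwv
        · rw [← hstuckeq w hw hwW]
          exact hedge_mem (Finset.mem_insert_of_mem (Finset.mem_insert_self _ _))
            (Finset.mem_insert_self _ _) hwv
      have hsub : f (insert v T') ⊆ f T' ∪ f (insert v W) := by
        intro x hx
        rcases hdesc _ x hx with rfl | ⟨u, hu, rfl⟩ | ⟨u, hu, w, hw, huw, rfl⟩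
        · exact Finset.mem_union_left _ (hc0 T')
        · by_cases h : u = v
          · rw [h]
            exact Finset.mem_union_right _ (hcv_mem (Finset.mem_insert_self _ _))
          · exact Finset.mem_union_left _
              (hcv_mem ((Finset.mem_insert.mp hu).resolve_left h))
        · by_cases h1 : u = v
          · have hw' : w ∈ T' := by
              rcases Finset.mem_insert.mp hw with h2 | h2
              · exact absurd (h1.trans h2.symm) huw
              · exact h2
            rw [h1]
            exact Finset.mem_union_right _ (hedgeVW w hw')
          · have hu' : u ∈ T' := (Finset.mem_insert.mp hu).resolve_left h1
            by_cases h2 : w = v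
            · rw [h2, hecomm]
              exact Finset.mem_union_right _ (hedgeVW u hu')
            · exact Finset.mem_union_left _
                (hedge_mem hu' ((Finset.mem_insert.mp hw).resolve_left h2) huw)
      -- card computation
      have hc1 : (f (insert v T')).card ≤ (f T' ∪ f (insert v W)).card :=
        Finset.card_le_card hsub
      have hc2 := Finset.card_union_add_card_inter (f T') (f (insert v W))
      have hc3 : (f W).card ≤ (f T' ∩ f (insert v W)).card := by
        apply Finset.card_le_card
        intro x hx
        exact Finset.mem_inter.mpr ⟨hmono hWT' hx, hmono (Finset.subset_insert _ _) hx⟩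
      have hc4 : (f (insert v W)).card ≤ (f W).card + (W.card + 1) := by
        calc (f (insert v W)).card ≤ (f W ∪ insert (cvf v) (W.image (ec v))).card :=
              Finset.card_le_card (hins v W)
          _ ≤ (f W).card + (insert (cvf v) (W.image (ec v))).card := Finset.card_union_le _ _
          _ ≤ (f W).card + (W.card + 1) := by
              have h5 := Finset.card_insert_le (cvf v) (W.image (ec v))
              have h6 := Finset.card_image_le (s := W) (f := ec v)
              omega
      have hc5 := hBump v hvP hvT'
      rcases K (insert v T') with h | h
      · omega
      · omega
    · -- non-stuck case
      push_neg at hstuck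
      obtain ⟨u, huT', huW, hinc⟩ := hstuck
      have huv : u ≠ v := fun h => hvT' (h ▸ huT')
      have hcomm : insert u (insert v W) = insert v (insert u W) := Finset.insert_comm u v W
      by_cases hcross : (f (insert u (insert v W))).card ≤ g
      · -- recurse
        have huTW : u ∈ T' \ W := Finset.mem_sdiff.mpr ⟨huT', huW⟩
        have hN' : (T' \ insert u W).card < N := by
          rw [← hWN, Finset.sdiff_insert]
          exact Finset.card_erase_lt_of_mem huTW
        apply IH _ hN' (insert u W) (Finset.insert_subset huT' hWT') rfl
        · rw [← hcomm]; exact hcross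
        · -- invariant
          have hnew : insert ((f (insert u (insert v W))).card) Jfil ⊆
              G.filter (fun m => (f {v}).card ≤ m ∧
                m ≤ (f (insert v (insert u W))).card) := by
            intro m hm
            have hcc : (f (insert u (insert v W))).card =
                (f (insert v (insert u W))).card := by rw [hcomm]
            rcases Finset.mem_insert.mp hm with rfl | hm
            · refine Finset.mem_filter.mpr ⟨hG _, ?_, le_of_eq hcc⟩
              apply Finset.card_le_card
              apply hmono
              intro x hx
              rw [Finset.mem_singleton] at hx
              subst hx
              exact Finset.mem_insert_of_mem (Finset.mem_insert_self _ _)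
            · rw [Finset.mem_filter] at hm
              refine Finset.mem_filter.mpr ⟨hm.1, hm.2.1, ?_⟩
              omega
          have hnotin : (f (insert u (insert v W))).card ∉ Jfil := by
            intro h
            have := (Finset.mem_filter.mp h).2.2
            omega
          have hcard : Jfil.card + 1 ≤ (G.filter (fun m => (f {v}).card ≤ m ∧
              m ≤ (f (insert v (insert u W))).card)).card := by
            have := Finset.card_le_card hnew
            rwa [Finset.card_insert_of_notMem hnotin] at this
          rw [Finset.card_insert_of_notMem huW]
          omega
      · -- crossing case
        push_neg at hcross
        have hKE : g + j < (f (insert u (insert v W))).card := by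
          rcases K (insert u (insert v W)) with h | h
          · omega
          · exact h
        have hup : (f (insert u (insert v W))).card ≤
            (f (insert v W)).card + ((insert v W).card + 1) := by
          calc (f (insert u (insert v W))).card
              ≤ (f (insert v W) ∪ insert (cvf u) ((insert v W).image (ec u))).card :=
                Finset.card_le_card (hins u (insert v W))
            _ ≤ (f (insert v W)).card + (insert (cvf u) ((insert v W).image (ec u))).card :=
                Finset.card_union_le _ _
            _ ≤ _ := by
                have h5 := Finset.card_insert_le (cvf u) ((insert v W).image (ec u))
                have h6 := Finset.card_image_le (s := insert v W) (f := ec u)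
                omega
        have hvWcard : (insert v W).card = W.card + 1 := Finset.card_insert_of_notMem hvW
        -- tightness
        have htight1 : (f (insert v W)).card = g ∧ W.card + 1 = j := by
          constructor <;> omega
        -- Jfil equals all of the low part of G
        have hJeq : Jfil = G.filter (· ≤ g) := by
          apply Finset.eq_of_subset_of_card_le hJsub
          omega
        have h1fil : (1 : ℕ) ∈ Jfil := by
          rw [hJeq]; exact Finset.mem_filter.mpr ⟨h1G, hg1⟩
        have hfv1 : (f {v}).card ≤ 1 := (Finset.mem_filter.mp h1fil).2.1
        have hcvv : cvf v = c0 := by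
          have h1 : cvf v ∈ f {v} := hcv_mem (Finset.mem_singleton_self v)
          have h2 : c0 ∈ f {v} := hc0 _
          exact Finset.card_le_one.mp hfv1 _ h1 _ h2
        -- bounds on f (insert u W)
        have hBu_up : (f (insert u W)).card ≤ (f W).card + (W.card + 1) := by
          calc (f (insert u W)).card
              ≤ (f W ∪ insert (cvf u) (W.image (ec u))).card :=
                Finset.card_le_card (hins u W)
            _ ≤ (f W).card + (insert (cvf u) (W.image (ec u))).card := Finset.card_union_le _ _
            _ ≤ _ := by
                have h5 := Finset.card_insert_le (cvf u) (W.image (ec u))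
                have h6 := Finset.card_image_le (s := W) (f := ec u)
                omega
        have hfW : (f W).card ≤ g := by
          have := Finset.card_le_card (hmono (Finset.subset_insert v W))
          omega
        have hBu_low : (f (insert u (insert v W))).card ≤
            (f (insert u W)).card + ((insert u W).card) := by
          have hsub2 : f (insert u (insert v W)) ⊆
              f (insert u W) ∪ (insert u W).image (ec v) := by
            rw [hcomm]
            intro x hx
            rcases Finset.mem_union.mp (hins v (insert u W) hx) with h | h
            · exact Finset.mem_union_left _ h
            · rcases Finset.mem_insert.mp h with rfl | h
              · rw [hcvv]
                exact Finset.mem_union_left _ (hc0 _)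
              · exact Finset.mem_union_right _ h
          calc (f (insert u (insert v W))).card
              ≤ (f (insert u W) ∪ (insert u W).image (ec v)).card :=
                Finset.card_le_card hsub2
            _ ≤ (f (insert u W)).card + ((insert u W).image (ec v)).card :=
                Finset.card_union_le _ _
            _ ≤ _ := by
                have h6 := Finset.card_image_le (s := insert u W) (f := ec v)
                omega
        have huWcard : (insert u W).card = W.card + 1 := Finset.card_insert_of_notMem huW
        have hBu_g : g < (f (insert u W)).card := by omega
        rcases K (insert u W) with h | h
        · omega
        · omega
  -- apply key at W = ∅
  have hfv_le : (f {v}).card ≤ g := by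
    have hfvsub : f {v} ⊆ insert c0 {cvf v} := by
      intro x hx
      rcases hdesc _ x hx with rfl | ⟨u, hu, rfl⟩ | ⟨u, hu, w, hw, huw, rfl⟩
      · exact Finset.mem_insert_self _ _
      · rw [Finset.mem_singleton] at hu
        subst hu
        exact Finset.mem_insert_of_mem (Finset.mem_singleton_self _)
      · rw [Finset.mem_singleton] at hu hw
        subst hu; subst hw
        exact absurd rfl huw
    have h2 : (f {v}).card ≤ 2 := le_trans (Finset.card_le_card hfvsub)
      (le_trans (Finset.card_insert_le _ _) (by simp))
    rcases K {v} with h | h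
    · exact h
    · omega
  have hfve : insert v (∅ : Finset ℕ) = {v} := rfl
  apply key (T' \ ∅).card ∅ (Finset.empty_subset _) rfl
  · rw [hfve]; exact hfv_le
  · rw [Finset.card_empty, hfve]
    apply Finset.card_pos.mpr
    exact ⟨(f {v}).card, Finset.mem_filter.mpr ⟨hG _, le_refl _, le_refl _⟩⟩


section Arith

/-- Arithmetic consequence of the gap structure. -/
lemma arith_lemma (k n : ℕ) (G : Finset ℕ) (hGIcc : G ⊆ Finset.Icc 1 k)
    (h1G : (1 : ℕ) ∈ G) (hkG : k ∈ G)
    (hgap : ∀ g ∈ G, g < k → ∃ g' ∈ G, g < g' ∧ g' ≤ g + (G.filter (· ≤ g)).card)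
    (hn : 2 ≤ n) (h₁ : n * (n - 1) / 2 + 1 ≤ k) : n ≤ G.card := by
  classical
  have claim : ∀ g : ℕ, g ∈ G →
      2 * g + (G.filter (· ≤ g)).card ≤ 2 + (G.filter (· ≤ g)).card * (G.filter (· ≤ g)).card := by
    intro g
    induction g using Nat.strong_induction_on with
    | _ g IH =>
    intro hgG
    set c := (G.filter (· ≤ g)).card with hcdef
    have hg1 : 1 ≤ g := (Finset.mem_Icc.mp (hGIcc hgG)).1
    have hc1 : 1 ≤ c := Finset.card_pos.mpr ⟨g, Finset.mem_filter.mpr ⟨hgG, le_refl g⟩⟩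
    by_cases hg : g = 1
    · subst hg
      have : c ≤ c * c := Nat.le_mul_of_pos_left c hc1
      omega
    · -- g ≥ 2
      have hg2 : 2 ≤ g := by omega
      set G' := G.filter (· < g) with hG'def
      have hG'ne : G'.Nonempty := ⟨1, Finset.mem_filter.mpr ⟨h1G, by omega⟩⟩
      set g₀ := G'.max' hG'ne with hg₀def
      have hg₀G' : g₀ ∈ G' := Finset.max'_mem _ _
      have hg₀G : g₀ ∈ G := (Finset.mem_filter.mp hg₀G').1
      have hg₀g : g₀ < g := (Finset.mem_filter.mp hg₀G').2
      set j₀ := (G.filter (· ≤ g₀)).card with hj₀def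
      have hgk : g ≤ k := (Finset.mem_Icc.mp (hGIcc hgG)).2
      obtain ⟨g', hg'G, hg₀g', hg'le⟩ := hgap g₀ hg₀G (by omega)
      have hgg' : g ≤ g' := by
        by_contra hlt
        push_neg at hlt
        have : g' ∈ G' := Finset.mem_filter.mpr ⟨hg'G, hlt⟩
        have := Finset.le_max' _ _ this
        omega
      have hkey2 : g ≤ g₀ + j₀ := by omega
      have hkey1 := IH g₀ hg₀g hg₀G
      rw [← hj₀def] at hkey1
      have hkey3 : j₀ + 1 ≤ c := by
        have hsub : insert g (G.filter (· ≤ g₀)) ⊆ G.filter (· ≤ g) := by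
          intro m hm
          rcases Finset.mem_insert.mp hm with rfl | hm
          · exact Finset.mem_filter.mpr ⟨hgG, le_refl _⟩
          · obtain ⟨h1, h2⟩ := Finset.mem_filter.mp hm
            exact Finset.mem_filter.mpr ⟨h1, by omega⟩
        have hnot : g ∉ G.filter (· ≤ g₀) := by
          intro h
          have := (Finset.mem_filter.mp h).2
          omega
        have := Finset.card_le_card hsub
        rwa [Finset.card_insert_of_notMem hnot] at this
      calc 2 * g + c ≤ 2 + j₀ * j₀ + j₀ + c := by omega
        _ = 2 + j₀ * (j₀ + 1) + c := by ring
        _ ≤ 2 + j₀ * c + c := by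
            have : j₀ * (j₀ + 1) ≤ j₀ * c := Nat.mul_le_mul_left j₀ hkey3
            omega
        _ = 2 + (j₀ + 1) * c := by ring
        _ ≤ 2 + c * c := by
            have : (j₀ + 1) * c ≤ c * c := Nat.mul_le_mul_right c hkey3
            omega
  -- apply at k
  have hfk : G.filter (· ≤ k) = G := by
    apply Finset.filter_true_of_mem
    intro x hx
    exact (Finset.mem_Icc.mp (hGIcc hx)).2
  have hclaimk := claim k hkG
  rw [hfk] at hclaimk
  set t := G.card with htdef
  by_contra hcon
  push_neg at hcon
  obtain ⟨a, rfl⟩ : ∃ a, n = a + 1 := ⟨n - 1, by omega⟩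
  have ha1 : 1 ≤ a := by omega
  have hta : t ≤ a := by omega
  have heven : 2 * ((a + 1) * a / 2) = (a + 1) * a := by
    apply Nat.two_mul_div_two_of_even
    rw [mul_comm]
    exact Nat.even_mul_succ_self a
  have h2k : (a + 1) * a + 2 ≤ 2 * k := by
    have : (a + 1) * (a + 1 - 1) = (a + 1) * a := by norm_num
    omega
  have hm1 : t * t ≤ a * t := Nat.mul_le_mul_right t hta
  have hm2 : a * t ≤ a * a := Nat.mul_le_mul_left a hta
  have hexp : (a + 1) * a = a * a + a := by ring
  omega

end Arith

section Assemble

/-- Existence of the achievable-values finset `G` with the gap property. -/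
lemma exists_G (Δ : ℕ → ℕ → ℕ) (k : ℕ) (hΔ : IsColouring Δ k) :
    ∃ G : Finset ℕ, (↑G : Set ℕ) ⊆ FSet Δ k ∧ G ⊆ Finset.Icc 1 k ∧ (1 : ℕ) ∈ G ∧ k ∈ G ∧
      ∀ g ∈ G, g < k → ∃ g' ∈ G, g < g' ∧ g' ≤ g + (G.filter (· ≤ g)).card := by
  classical
  obtain ⟨hcol, hsurj⟩ := hΔ
  obtain ⟨M, c0, hM, hc0Icc, hmonoM⟩ := infinite_ramsey Δ k hcol
  have hIcc : ∀ S, fS Δ k hcol M c0 S ⊆ Finset.Icc 1 k := by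
    intro S x hx
    rcases fS_desc Δ k hcol M c0 S x hx with h | ⟨u, hu, h⟩ | ⟨p, hp, q, hq, hpq, h⟩
    · rw [h]; exact hc0Icc
    · rw [h]; exact (AA_succ Δ k hcol M hM u).2.1
    · rw [h]; exact hcol p q hpq
  have hcard_Icc : ∀ S, (fS Δ k hcol M c0 S).card ∈ Finset.Icc 1 k := by
    intro S
    rw [Finset.mem_Icc]
    refine ⟨Finset.card_pos.mpr ⟨c0, fS_c0 Δ k hcol M c0 S⟩, ?_⟩
    have := Finset.card_le_card (hIcc S)
    rwa [Nat.card_Icc, Nat.add_sub_cancel] at this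
  set G := (Finset.Icc 1 k).filter
    (fun m => ∃ T : Finset ℕ, (fS Δ k hcol M c0 T).card = m) with hGdef
  have hG : ∀ S, (fS Δ k hcol M c0 S).card ∈ G :=
    fun S => Finset.mem_filter.mpr ⟨hcard_Icc S, S, rfl⟩
  have hGF : (↑G : Set ℕ) ⊆ FSet Δ k := by
    intro m hm
    obtain ⟨hmIcc, T, hT⟩ := Finset.mem_filter.mp (Finset.mem_coe.mp hm)
    set N := T.sup id + 1 with hNdef
    have hN : ∀ x ∈ T, x < N := by
      intro x hx
      have : id x ≤ T.sup id := Finset.le_sup hx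
      simp only [id] at this
      omega
    refine ⟨hmIcc, ↑T ∪ AA Δ k hcol M N, ?_, ?_⟩
    · exact Set.Infinite.mono Set.subset_union_right (AA_inf Δ k hcol M hM N)
    · rw [fS_spec Δ k hcol M c0 hM hmonoM T N hN, Set.ncard_coe_finset, hT]
  have hfull : ∃ S₀ : Finset ℕ, Finset.Icc 1 k ⊆ fS Δ k hcol M c0 S₀ := by
    set w : ℕ → ℕ × ℕ := fun c =>
      if h : ∃ p : ℕ × ℕ, p.1 ≠ p.2 ∧ edgeCol Δ p.1 p.2 = c then h.choose else (0, 1)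
      with hwdef
    refine ⟨(Finset.Icc 1 k).biUnion (fun c => {(w c).1, (w c).2}), ?_⟩
    intro c hc
    obtain ⟨x, y, hxy, hxyc⟩ := hsurj c hc
    have hex : ∃ p : ℕ × ℕ, p.1 ≠ p.2 ∧ edgeCol Δ p.1 p.2 = c := ⟨(x, y), hxy, hxyc⟩
    have hw : (w c).1 ≠ (w c).2 ∧ edgeCol Δ (w c).1 (w c).2 = c := by
      rw [hwdef]
      simp only [dif_pos hex]
      exact hex.choose_spec
    have h1 : (w c).1 ∈ (Finset.Icc 1 k).biUnion (fun c => {(w c).1, (w c).2}) :=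
      Finset.mem_biUnion.mpr ⟨c, hc, Finset.mem_insert_self _ _⟩
    have h2 : (w c).2 ∈ (Finset.Icc 1 k).biUnion (fun c => {(w c).1, (w c).2}) :=
      Finset.mem_biUnion.mpr ⟨c, hc,
        Finset.mem_insert_of_mem (Finset.mem_singleton_self _)⟩
    rw [← hw.2]
    exact fS_edge_mem Δ k hcol M c0 h1 h2 hw.1
  have h1G : (1 : ℕ) ∈ G := by
    have := hG ∅
    rwa [fS_card0] at this
  have hkG : k ∈ G := by
    obtain ⟨S₀, hS₀⟩ := hfull
    have heq : fS Δ k hcol M c0 S₀ = Finset.Icc 1 k :=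
      Finset.Subset.antisymm (hIcc S₀) hS₀
    have hcard : (fS Δ k hcol M c0 S₀).card = k := by
      rw [heq, Nat.card_Icc, Nat.add_sub_cancel]
    exact hcard ▸ hG S₀
  refine ⟨G, hGF, Finset.filter_subset _ _, h1G, hkG, ?_⟩
  intro g hgG hgk
  exact gap_abstract k c0 (cvf Δ k hcol M) (edgeCol Δ) (fS Δ k hcol M c0) G
    (fun {S T} h => fS_monotone Δ k hcol M c0 h) (fS_insert Δ k hcol M c0) (edgeCol_comm Δ)
    (fun {u w S} hu hw huw => fS_edge_mem Δ k hcol M c0 hu hw huw)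
    (fun {u S} h => fS_cv_mem Δ k hcol M c0 h)
    (fS_desc Δ k hcol M c0) (fS_c0 Δ k hcol M c0) (fS_card0 Δ k hcol M c0) hG hIcc hfull g
    (Finset.mem_filter.mp hgG).2 hgk

lemma main_bound (k n : ℕ) (hn : 2 ≤ n) (h₁ : n * (n - 1) / 2 + 1 ≤ k)
    (Δ : ℕ → ℕ → ℕ) (hΔ : IsColouring Δ k) : n ≤ (FSet Δ k).ncard := by
  obtain ⟨G, hGF, hGIcc, h1G, hkG, hgap⟩ := exists_G Δ k hΔ
  have hcard : n ≤ G.card := arith_lemma k n G hGIcc h1G hkG hgap hn h₁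
  have hFfin : (FSet Δ k).Finite := by
    apply Set.Finite.subset (Finset.finite_toSet (Finset.Icc 1 k))
    intro m hm
    exact hm.1
  calc n ≤ G.card := hcard
    _ = (↑G : Set ℕ).ncard := (Set.ncard_coe_finset G).symm
    _ ≤ (FSet Δ k).ncard := Set.ncard_le_ncard hGF hFfin

/-- A concrete surjective colouring, to show the `sInf` is over a nonempty set. -/
lemma exists_colouring (k : ℕ) (hk : 1 ≤ k) :
    IsColouring (fun a b => (b - a - 1) % k + 1) k := by
  have hec : ∀ x y : ℕ, edgeCol (fun a b => (b - a - 1) % k + 1) x y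
      = (max x y - min x y - 1) % k + 1 := fun x y => rfl
  constructor
  · intro x y hxy
    rw [Finset.mem_Icc, hec]
    have := Nat.mod_lt (max x y - min x y - 1) (show 0 < k by omega)
    omega
  · intro c hc
    rw [Finset.mem_Icc] at hc
    refine ⟨0, c, by omega, ?_⟩
    rw [hec]
    have h1 : max 0 c - min 0 c - 1 = c - 1 := by
      simp
    rw [h1, Nat.mod_eq_of_lt (by omega)]
    omega

end Assemble

/-- **Theorem 1.** If `n ≥ 2` is the largest natural number with `k ≥ n(n-1)/2 + 1`, then
every surjective colouring `Δ : ℕ^(2) ↠ [k]` satisfies `|F_Δ| ≥ n`; equivalently `ψ(k) ≥ n`. -/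
theorem exactly_mColoured_lower_bound (k n : ℕ) (hk : 2 ≤ k) (hn : 2 ≤ n)
    (h₁ : n * (n - 1) / 2 + 1 ≤ k)
    (hmax : ∀ m : ℕ, m * (m - 1) / 2 + 1 ≤ k → m ≤ n) :
    (∀ Δ : ℕ → ℕ → ℕ, IsColouring Δ k → n ≤ (FSet Δ k).ncard) ∧ n ≤ psi k := by
  constructor
  · intro Δ hΔ
    exact main_bound k n hn h₁ Δ hΔ
  · apply le_csInf
    · exact ⟨(FSet (fun a b => (b - a - 1) % k + 1) k).ncard,
        (fun a b => (b - a - 1) % k + 1), exists_colouring k (by omega), rfl⟩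
    · rintro b ⟨Δ, hΔ, rfl⟩
      exact main_bound k n hn h₁ Δ hΔ
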